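/- With the notation and hypotheses of the context, suppose in addition that v(-L) = v(L) = 0, v'(-L) = v'(L) = 0, and v' is absolutely continuous with derivative v'' ∈ L²(-L,L). Then there is a constant c > 0 depending only on L, H, d, σ_max, m₁, m₂, m₃ such that (1/2) ∫_{-L}^{L} ∫_{-H-d}^{v(x)} σ(x,z) |∇h_v(x,z)|² dz dx ≤ c (1 + ‖v‖₂ ‖v''‖₂), where ‖·‖₂ denotes the L²(-L,L) norm. -/

import Mathlib

open MeasureTheory Set

lemma mycs {α : Type*} [MeasurableSpace α] (μ : Measure α) (f g : α → ℝ)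
    (hf : MemLp f 2 μ) (hg : MemLp g 2 μ) :
    ∫ x, |f x| * |g x| ∂μ ≤ Real.sqrt (∫ x, (f x) ^ 2 ∂μ) * Real.sqrt (∫ x, (g x) ^ 2 ∂μ) := by
  have h2 : (ENNReal.ofReal (2:ℝ)) = 2 := by norm_num
  have hpq : (2:ℝ).HolderConjugate 2 := Real.holderConjugate_iff.mpr ⟨one_lt_two, by norm_num⟩
  have key := integral_mul_le_Lp_mul_Lq_of_nonneg hpq
    (f := fun x => |f x|) (g := fun x => |g x|)
    (Filter.Eventually.of_forall fun x => abs_nonneg _)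
    (Filter.Eventually.of_forall fun x => abs_nonneg _)
    (by rw [h2]; exact hf.abs) (by rw [h2]; exact hg.abs)
  have e : ∀ h : α → ℝ, (∫ a, |h a| ^ (2:ℝ) ∂μ) = ∫ x, (h x) ^ 2 ∂μ := by
    intro h
    apply integral_congr_ae; filter_upwards with x
    rw [show ((2:ℝ)) = ((2:ℕ):ℝ) by norm_num, Real.rpow_natCast, sq_abs]
  calc ∫ x, |f x| * |g x| ∂μ
      ≤ (∫ a, |f a| ^ (2:ℝ) ∂μ) ^ (1/(2:ℝ)) * (∫ a, |g a| ^ (2:ℝ) ∂μ) ^ (1/(2:ℝ)) := key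
  _ = Real.sqrt (∫ x, (f x) ^ 2 ∂μ) * Real.sqrt (∫ x, (g x) ^ 2 ∂μ) := by
      rw [e f, e g, ← Real.sqrt_eq_rpow, ← Real.sqrt_eq_rpow]

lemma myftc (a b : ℝ) (v v' : ℝ → ℝ)
    (hv : ∀ x ∈ Icc a b, HasDerivWithinAt v (v' x) (Icc a b) x)
    (hv' : ContinuousOn v' (Icc a b)) :
    ∀ s ∈ Icc a b, ∀ u ∈ Icc a b, s ≤ u → ∫ x in s..u, v' x = v u - v s := by
  have hvc : ContinuousOn v (Icc a b) := fun x hx => (hv x hx).continuousWithinAt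
  intro s hs u hu hsu
  apply intervalIntegral.integral_eq_sub_of_hasDeriv_right_of_le hsu
  · exact hvc.mono (Icc_subset_Icc hs.1 hu.2)
  · intro x hx
    exact ((hv x ⟨hs.1.trans hx.1.le, hx.2.le.trans hu.2⟩).hasDerivAt
      (Icc_mem_nhds (lt_of_le_of_lt hs.1 hx.1) (lt_of_lt_of_le hx.2 hu.2))).hasDerivWithinAt
  · exact (hv'.mono (Icc_subset_Icc hs.1 hu.2)).intervalIntegrable_of_Icc hsu

lemma myibp (a b : ℝ) (hab : a < b) (v v' v'' : ℝ → ℝ)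
    (hv : ∀ x ∈ Icc a b, HasDerivWithinAt v (v' x) (Icc a b) x)
    (hv' : ContinuousOn v' (Icc a b))
    (hvb : v b = 0) (hv'a : v' a = 0)
    (hrep : ∀ x ∈ Icc a b, v' x = v' a + ∫ t in a..x, v'' t)
    (hint : IntervalIntegrable v'' volume a b) :
    ∫ x in a..b, (v' x) ^ 2 = - ∫ x in a..b, v x * v'' x := by
  have hvc : ContinuousOn v (Icc a b) := fun x hx => (hv x hx).continuousWithinAt
  have ftc := myftc a b v v' hv hv'
  set μ := volume.restrict (Ioc a b) with hμ
  have hv'int : IntegrableOn v' (Ioc a b) volume :=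
    (hv'.integrableOn_Icc).mono_set Ioc_subset_Icc_self
  have hv''int : IntegrableOn v'' (Ioc a b) volume := hint.1
  have hprod : Integrable (fun p : ℝ × ℝ => v' p.1 * v'' p.2) (μ.prod μ) :=
    Integrable.mul_prod hv'int hv''int
  set f : ℝ → ℝ → ℝ := fun x t => if t ≤ x then v' x * v'' t else 0 with hf
  have hfint : Integrable (fun p : ℝ × ℝ => f p.1 p.2) (μ.prod μ) := by
    have := hprod.indicator (s := {p : ℝ × ℝ | p.2 ≤ p.1})
      (measurableSet_le measurable_snd measurable_fst)
    apply this.congr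
    filter_upwards with p
    simp only [indicator_apply, mem_setOf_eq, hf]
  have hswap : ∫ x, (∫ t, f x t ∂μ) ∂μ = ∫ t, (∫ x, f x t ∂μ) ∂μ :=
    integral_integral_swap hfint
  have hL : ∀ x ∈ Ioc a b, (∫ t, f x t ∂μ) = (v' x) ^ 2 := by
    intro x hx
    have e1 : (∫ t, f x t ∂μ) = ∫ t, (Iic x).indicator (fun t => v' x * v'' t) t ∂μ := by
      apply integral_congr_ae; filter_upwards with t
      simp only [hf, indicator_apply, mem_Iic]
    rw [e1, integral_indicator measurableSet_Iic, hμ,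
      Measure.restrict_restrict measurableSet_Iic]
    have e2 : Iic x ∩ Ioc a b = Ioc a x := by
      ext t; simp only [mem_inter_iff, mem_Iic, mem_Ioc]
      exact ⟨fun h => ⟨h.2.1, h.1⟩, fun h => ⟨h.2, h.1, h.2.trans hx.2⟩⟩
    rw [e2, integral_const_mul, ← intervalIntegral.integral_of_le hx.1.le]
    have := hrep x ⟨hx.1.le, hx.2⟩
    rw [hv'a, zero_add] at this
    rw [← this]; ring
  have hR : ∀ t ∈ Ioc a b, (∫ x, f x t ∂μ) = -(v t * v'' t) := by
    intro t ht
    have e1 : (∫ x, f x t ∂μ) = ∫ x, (Ici t).indicator (fun x => v' x * v'' t) x ∂μ := by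
      apply integral_congr_ae; filter_upwards with x
      simp only [hf, indicator_apply, mem_Ici]
    rw [e1, integral_indicator measurableSet_Ici, hμ,
      Measure.restrict_restrict measurableSet_Ici]
    have e2 : Ici t ∩ Ioc a b = Icc t b := by
      ext x; simp only [mem_inter_iff, mem_Ici, mem_Ioc, mem_Icc]
      exact ⟨fun h => ⟨h.1, h.2.2⟩, fun h => ⟨h.1, ht.1.trans_le h.1, h.2⟩⟩
    rw [e2, integral_mul_const, integral_Icc_eq_integral_Ioc,
      ← intervalIntegral.integral_of_le ht.2,
      ftc t ⟨ht.1.le, ht.2⟩ b ⟨hab.le, le_refl b⟩ ht.2, hvb]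
    ring
  have eL : ∫ x in a..b, (v' x) ^ 2 = ∫ x, (∫ t, f x t ∂μ) ∂μ := by
    rw [intervalIntegral.integral_of_le hab.le]
    exact integral_congr_ae (Filter.eventually_of_mem
      (self_mem_ae_restrict measurableSet_Ioc) (fun x hx => (hL x hx).symm))
  have eR : ∫ t, (∫ x, f x t ∂μ) ∂μ = - ∫ x in a..b, v x * v'' x := by
    rw [intervalIntegral.integral_of_le hab.le, ← integral_neg]
    exact integral_congr_ae (Filter.eventually_of_mem
      (self_mem_ae_restrict measurableSet_Ioc) (fun t ht => hR t ht))
  rw [eL, hswap, eR]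

lemma memlp_of_continuousOn (a b : ℝ) (g : ℝ → ℝ) (hg : ContinuousOn g (Icc a b)) :
    MemLp g 2 (volume.restrict (Ioc a b)) := by
  haveI : IsFiniteMeasure (volume.restrict (Ioc a b)) :=
    ⟨by rw [Measure.restrict_apply_univ]; exact measure_Ioc_lt_top⟩
  obtain ⟨C, hC⟩ := (isCompact_Icc (a := a) (b := b)).exists_bound_of_continuousOn hg
  refine MemLp.of_bound ((hg.mono Ioc_subset_Icc_self).aestronglyMeasurable measurableSet_Ioc) C ?_
  exact Filter.eventually_of_mem (self_mem_ae_restrict measurableSet_Ioc)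
    (fun x hx => hC x (Ioc_subset_Icc_self hx))

lemma mypoincare (a b : ℝ) (hab : a < b) (v v' : ℝ → ℝ)
    (hv : ∀ x ∈ Icc a b, HasDerivWithinAt v (v' x) (Icc a b) x)
    (hv' : ContinuousOn v' (Icc a b)) (hva : v a = 0) :
    ∫ x in a..b, (v x) ^ 2 ≤ (b - a) ^ 2 * ∫ x in a..b, (v' x) ^ 2 := by
  have hvc : ContinuousOn v (Icc a b) := fun x hx => (hv x hx).continuousWithinAt
  have ftc := myftc a b v v' hv hv'
  set S := ∫ x in a..b, (v' x) ^ 2 with hS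
  have hS0 : 0 ≤ S := intervalIntegral.integral_nonneg hab.le (fun x _ => sq_nonneg _)
  have key : ∀ x ∈ Icc a b, (v x) ^ 2 ≤ (b - a) * S := by
    intro x hx
    have hax : a ≤ x := hx.1
    have e1 : v x = ∫ t in a..x, v' t := by
      rw [ftc a ⟨le_refl a, hab.le⟩ x hx hax, hva, sub_zero]
    have h2 : |v x| ≤ ∫ t in Ioc a x, |v' t| := by
      rw [e1, intervalIntegral.integral_of_le hax, ← Real.norm_eq_abs]
      exact (norm_integral_le_integral_norm _).trans (le_of_eq rfl)
    have h3 : (∫ t in Ioc a x, |v' t|) ≤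
        Real.sqrt (x - a) * Real.sqrt (∫ t in Ioc a x, (v' t) ^ 2) := by
      have := mycs (volume.restrict (Ioc a x)) (fun _ => (1:ℝ)) v'
        (memLp_const 1)
        (memlp_of_continuousOn a x v' (hv'.mono (Icc_subset_Icc (le_refl a) hx.2)))
      simp only [abs_one, one_mul, one_pow] at this
      have e2 : (∫ _t in Ioc a x, (1:ℝ)) = x - a := by
        simp [Real.volume_Ioc, ENNReal.toReal_ofReal (sub_nonneg.2 hax), hax]
      rwa [e2] at this
    have h4 : (∫ t in Ioc a x, (v' t) ^ 2) ≤ S := by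
      rw [hS, intervalIntegral.integral_of_le hab.le]
      apply setIntegral_mono_set
      · exact ((hv'.pow 2).integrableOn_Icc).mono_set Ioc_subset_Icc_self
      · exact Filter.eventually_of_mem (self_mem_ae_restrict measurableSet_Ioc)
          (fun t _ => sq_nonneg _)
      · exact HasSubset.Subset.eventuallyLE (Ioc_subset_Ioc_right hx.2)
    calc (v x) ^ 2 = |v x| ^ 2 := (sq_abs _).symm
    _ ≤ (Real.sqrt (x - a) * Real.sqrt (∫ t in Ioc a x, (v' t) ^ 2)) ^ 2 := by
        apply pow_le_pow_left₀ (abs_nonneg _) (h2.trans h3)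
    _ = (x - a) * (∫ t in Ioc a x, (v' t) ^ 2) := by
        rw [mul_pow, Real.sq_sqrt (sub_nonneg.2 hax), Real.sq_sqrt]
        exact integral_nonneg (fun t => sq_nonneg _)
    _ ≤ (b - a) * S := by
        apply mul_le_mul (by linarith [hx.2]) h4 (integral_nonneg fun t => sq_nonneg _)
          (by linarith)
  calc ∫ x in a..b, (v x) ^ 2 ≤ ∫ _x in a..b, (b - a) * S := by
        apply intervalIntegral.integral_mono_on hab.le
        · exact ((hvc.mono (by simp [hab.le])).pow 2).intervalIntegrable
        · exact intervalIntegrable_const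
        · exact key
  _ = (b - a) ^ 2 * S := by
        rw [intervalIntegral.integral_const, smul_eq_mul]; ring

lemma myinterp (a b : ℝ) (hab : a < b) (v v' v'' : ℝ → ℝ)
    (hv : ∀ x ∈ Icc a b, HasDerivWithinAt v (v' x) (Icc a b) x)
    (hv' : ContinuousOn v' (Icc a b))
    (hvb : v b = 0) (hv'a : v' a = 0)
    (hrep : ∀ x ∈ Icc a b, v' x = v' a + ∫ t in a..x, v'' t)
    (hint : IntervalIntegrable v'' volume a b)
    (hint2 : IntervalIntegrable (fun t => (v'' t) ^ 2) volume a b) :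
    ∫ x in a..b, (v' x) ^ 2 ≤
      Real.sqrt (∫ x in a..b, (v x) ^ 2) * Real.sqrt (∫ x in a..b, (v'' x) ^ 2) := by
  have hvc : ContinuousOn v (Icc a b) := fun x hx => (hv x hx).continuousWithinAt
  rw [myibp a b hab v v' v'' hv hv' hvb hv'a hrep hint]
  rw [intervalIntegral.integral_of_le hab.le, intervalIntegral.integral_of_le hab.le,
    intervalIntegral.integral_of_le hab.le]
  set μ := volume.restrict (Ioc a b) with hμ
  have h1 : -(∫ x, v x * v'' x ∂μ) ≤ |∫ x, v x * v'' x ∂μ| := neg_le_abs _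
  have h2 : |∫ x, v x * v'' x ∂μ| ≤ ∫ x, |v x| * |v'' x| ∂μ := by
    rw [← Real.norm_eq_abs]
    refine (norm_integral_le_integral_norm _).trans (le_of_eq ?_)
    apply integral_congr_ae; filter_upwards with x
    rw [Real.norm_eq_abs, abs_mul]
  refine (h1.trans h2).trans (mycs μ v v'' (memlp_of_continuousOn a b v hvc) ?_)
  have hasm : AEStronglyMeasurable v'' μ := hint.1.1
  exact (memLp_two_iff_integrable_sq hasm).2 hint2.1

lemma stepii (c₁ c₂ r a b : ℝ) :
    IntervalIntegrable (fun z => if z ≤ r then c₁ else c₂) volume a b := by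
  rw [intervalIntegrable_iff]
  refine Integrable.mono' (g := fun _ => |c₁| + |c₂|) ?_ ?_ ?_
  · exact integrableOn_const (by rw [Set.uIoc]; exact measure_Ioc_lt_top.ne)
  · exact (Measurable.ite (measurableSet_le measurable_id measurable_const)
      measurable_const measurable_const).aestronglyMeasurable
  · filter_upwards with z
    rw [Real.norm_eq_abs]
    split_ifs
    · exact le_add_of_nonneg_right (abs_nonneg _)
    · exact le_add_of_nonneg_left (abs_nonneg _)

lemma stepbound (r d σmax B₁ w : ℝ) (hd : 0 < d) (hw : r ≤ w) (hσ : 0 ≤ σmax) (hB₁ : 0 ≤ B₁)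
    (F : ℝ → ℝ)
    (hF : ∀ z ∈ Ioc (r - d) w, ‖F z‖ ≤ σmax * (if z ≤ r then B₁ else B₁ / (w - r))) :
    ‖∫ z in (r - d)..w, F z‖ ≤ σmax * (d + 1) * B₁ := by
  set B₂ := B₁ / (w - r) with hB2def
  have hB₂ : 0 ≤ B₂ := div_nonneg hB₁ (by linarith)
  set g : ℝ → ℝ := fun z => if z ≤ r then σmax * B₁ else σmax * B₂ with hgdef
  have hrdw : r - d ≤ w := by linarith
  have key : ‖∫ z in (r - d)..w, F z‖ ≤ |∫ z in (r - d)..w, g z| := by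
    apply intervalIntegral.norm_integral_le_abs_of_norm_le _ (stepii _ _ _ _ _)
    rw [uIoc_of_le hrdw]
    exact Filter.eventually_of_mem (self_mem_ae_restrict measurableSet_Ioc)
      (fun z hz => by simpa [hgdef, mul_ite] using hF z hz)
  have e1 : (∫ z in (r - d)..r, g z) = σmax * B₁ * d := by
    rw [intervalIntegral.integral_congr (g := fun _ => σmax * B₁)
      (fun z hz => by
        rw [uIcc_of_le (by linarith : r - d ≤ r)] at hz
        simp [hgdef, if_pos hz.2]),
      intervalIntegral.integral_const, smul_eq_mul]
    ring
  have e2 : (∫ z in r..w, g z) = σmax * B₂ * (w - r) := by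
    rw [intervalIntegral.integral_of_le hw,
      setIntegral_congr_fun measurableSet_Ioc (g := fun _ => σmax * B₂)
        (fun z hz => by simp [hgdef, if_neg (not_le.2 hz.1)]),
      setIntegral_const, measureReal_def, Real.volume_Ioc, ENNReal.toReal_ofReal (by linarith), smul_eq_mul]
    ring
  have esplit : (∫ z in (r - d)..w, g z) = σmax * B₁ * d + σmax * B₂ * (w - r) := by
    rw [← intervalIntegral.integral_add_adjacent_intervals (b := r) (stepii _ _ _ _ _)
      (stepii _ _ _ _ _), e1, e2]
  have hB2w : B₂ * (w - r) ≤ B₁ := by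
    rcases eq_or_lt_of_le hw with h | h
    · rw [← h, sub_self, mul_zero]; exact hB₁
    · rw [hB2def, div_mul_cancel₀ _ (by linarith : w - r ≠ 0)]
  have hnn0 : (0:ℝ) ≤ σmax * B₁ * d + σmax * B₂ * (w - r) := by
    nlinarith [mul_nonneg (mul_nonneg hσ hB₂) (sub_nonneg.2 hw),
      mul_nonneg (mul_nonneg hσ hB₁) hd.le]
  have hfin : |∫ z in (r - d)..w, g z| ≤ σmax * (d + 1) * B₁ := by
    rw [esplit, abs_of_nonneg hnn0]
    nlinarith
  exact key.trans hfin

set_option maxHeartbeats 1000000 in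
/-- Refined Dirichlet-energy bound from the proof of Lemma 3.4: there is a constant
`c > 0`, depending only on `L, H, d, σ_max, m₁, m₂, m₃`, such that for every
admissible `σ`, boundary data `h₁, h₂` (with the stated gradient bounds) and every
clamped `H²` deformation `v ≥ -H`,
`(1/2) ∫_D ∫_{-H-d}^{v(x)} σ |∇h_v|² dz dx ≤ c (1 + ‖v‖₂ ‖v''‖₂)`. -/
theorem stmt7 (L H d σmax m₁ m₂ m₃ : ℝ)
    (hL : 0 < L) (hH : 0 < H) (hd : 0 < d) (hσmax : 0 < σmax)
    (hm₁ : 0 < m₁) (hm₂ : 0 < m₂) (hm₃ : 0 < m₃) :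
    ∃ c > 0, ∀ (σ : ℝ → ℝ → ℝ), Measurable (Function.uncurry σ) →
      (∀ x ∈ Icc (-L) L, ∀ z ∈ Ici (-H - d), 0 ≤ σ x z ∧ σ x z ≤ σmax) →
      ∀ (h₁x h₁z h₁w h₂x h₂z h₂w : ℝ → ℝ → ℝ → ℝ),
      (∀ x ∈ Icc (-L) L, ∀ z ∈ Icc (-H - d) (-H), ∀ w ∈ Ici (-H),
        |h₁x x z w| + |h₁z x z w| ≤ Real.sqrt (m₁ + m₂ * w ^ 2) ∧
        |h₁w x z w| ≤ Real.sqrt m₃) →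
      (∀ x ∈ Icc (-L) L, ∀ w ∈ Ici (-H), ∀ z ∈ Icc (-H) w,
        |h₂x x z w| + |h₂z x z w| ≤ Real.sqrt ((m₁ + m₂ * w ^ 2) / (H + w)) ∧
        |h₂w x z w| ≤ Real.sqrt (m₃ / (H + w))) →
      ∀ (v v' v'' : ℝ → ℝ),
      (∀ x ∈ Icc (-L) L, HasDerivWithinAt v (v' x) (Icc (-L) L) x) →
      ContinuousOn v' (Icc (-L) L) →
      (∀ x ∈ Icc (-L) L, -H ≤ v x) →
      v (-L) = 0 → v L = 0 → v' (-L) = 0 → v' L = 0 →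
      (∀ x ∈ Icc (-L) L, v' x = v' (-L) + ∫ t in (-L)..x, v'' t) →
      IntervalIntegrable v'' volume (-L) L →
      IntervalIntegrable (fun t => (v'' t) ^ 2) volume (-L) L →
      (1 / 2) * ∫ x in (-L)..L, (∫ z in (-H - d)..(v x),
          σ x z * (if z ≤ -H then
              (h₁x x z (v x) + h₁w x z (v x) * v' x) ^ 2 + (h₁z x z (v x)) ^ 2
            else
              (h₂x x z (v x) + h₂w x z (v x) * v' x) ^ 2 + (h₂z x z (v x)) ^ 2))
        ≤ c * (1 + Real.sqrt (∫ x in (-L)..L, (v x) ^ 2) *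
            Real.sqrt (∫ x in (-L)..L, (v'' x) ^ 2)) := by
  have hab : (-L) < L := by linarith
  refine ⟨σmax * (d + 1) * (2 * L * m₁ + 4 * L ^ 2 * m₂ + m₃), by positivity, ?_⟩
  intro σ hσmeas hσbd h₁x h₁z h₁w h₂x h₂z h₂w hbd1 hbd2 v v' v'' hv hv'c hvH hva hvb hv'a hv'b
    hrep hii hii2
  have hvc : ContinuousOn v (Icc (-L) L) := fun x hx => (hv x hx).continuousWithinAt
  set Bf : ℝ → ℝ := fun x => 2 * (m₁ + m₂ * (v x) ^ 2) + 2 * m₃ * (v' x) ^ 2 with hBfdef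
  -- inner bound
  have hinner : ∀ x ∈ Ioc (-L) L,
      ‖∫ z in (-H - d)..(v x),
          σ x z * (if z ≤ -H then
              (h₁x x z (v x) + h₁w x z (v x) * v' x) ^ 2 + (h₁z x z (v x)) ^ 2
            else
              (h₂x x z (v x) + h₂w x z (v x) * v' x) ^ 2 + (h₂z x z (v x)) ^ 2)‖
        ≤ σmax * (d + 1) * Bf x := by
    intro x hx
    have hxIcc : x ∈ Icc (-L) L := ⟨hx.1.le, hx.2⟩
    have hw : -H ≤ v x := hvH x hxIcc
    apply stepbound (-H) d σmax (Bf x) (v x) hd hw hσmax.le (by positivity)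
    intro z hz
    have hσz := hσbd x hxIcc z (by simp only [mem_Ici]; linarith [hz.1])
    rw [Real.norm_eq_abs, abs_mul, abs_of_nonneg hσz.1]
    split_ifs with hzH
    · obtain ⟨hb1, hb2⟩ := hbd1 x hxIcc z ⟨hz.1.le, hzH⟩ (v x) (mem_Ici.2 hw)
      have h0 : (0:ℝ) ≤ m₁ + m₂ * (v x) ^ 2 := by positivity
      have hs1 : (|h₁x x z (v x)| + |h₁z x z (v x)|) ^ 2 ≤ m₁ + m₂ * (v x) ^ 2 := by
        have := pow_le_pow_left₀ (by positivity) hb1 2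
        rwa [Real.sq_sqrt h0] at this
      have hs2 : (h₁w x z (v x)) ^ 2 ≤ m₃ := by
        have := pow_le_pow_left₀ (abs_nonneg _) hb2 2
        rwa [Real.sq_sqrt hm₃.le, sq_abs] at this
      have hA : (h₁x x z (v x) + h₁w x z (v x) * v' x) ^ 2 + (h₁z x z (v x)) ^ 2 ≤ Bf x := by
        show _ ≤ 2 * (m₁ + m₂ * (v x) ^ 2) + 2 * m₃ * (v' x) ^ 2
        nlinarith [sq_nonneg (h₁x x z (v x) - h₁w x z (v x) * v' x),
          sq_abs (h₁x x z (v x)), sq_abs (h₁z x z (v x)),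
          mul_nonneg (abs_nonneg (h₁x x z (v x))) (abs_nonneg (h₁z x z (v x))),
          mul_le_mul_of_nonneg_right hs2 (sq_nonneg (v' x))]
      rw [abs_of_nonneg (by positivity)]
      exact mul_le_mul hσz.2 hA (by positivity) hσmax.le
    · have hzgt : -H < z := not_le.1 hzH
      have hvgt : -H < v x := lt_of_lt_of_le hzgt hz.2
      have hHw : 0 < H + v x := by linarith
      obtain ⟨hb1, hb2⟩ := hbd2 x hxIcc (v x) (mem_Ici.2 hw) z ⟨hzgt.le, hz.2⟩
      have h0 : (0:ℝ) ≤ (m₁ + m₂ * (v x) ^ 2) / (H + v x) := by positivity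
      have hs1 : (|h₂x x z (v x)| + |h₂z x z (v x)|) ^ 2 ≤ (m₁ + m₂ * (v x) ^ 2) / (H + v x) := by
        have := pow_le_pow_left₀ (by positivity) hb1 2
        rwa [Real.sq_sqrt h0] at this
      have hs2 : (h₂w x z (v x)) ^ 2 ≤ m₃ / (H + v x) := by
        have := pow_le_pow_left₀ (abs_nonneg _) hb2 2
        rwa [Real.sq_sqrt (by positivity), sq_abs] at this
      have hne : H + v x ≠ 0 := ne_of_gt hHw
      have hdiv : Bf x / (v x - -H) =
          2 * ((m₁ + m₂ * (v x) ^ 2) / (H + v x)) + 2 * (m₃ / (H + v x)) * (v' x) ^ 2 := by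
        show (2 * (m₁ + m₂ * (v x) ^ 2) + 2 * m₃ * (v' x) ^ 2) / (v x - -H) = _
        rw [show v x - -H = H + v x by ring]
        field_simp
      have hA : (h₂x x z (v x) + h₂w x z (v x) * v' x) ^ 2 + (h₂z x z (v x)) ^ 2
          ≤ Bf x / (v x - -H) := by
        rw [hdiv]
        nlinarith [sq_nonneg (h₂x x z (v x) - h₂w x z (v x) * v' x),
          sq_abs (h₂x x z (v x)), sq_abs (h₂z x z (v x)),
          mul_nonneg (abs_nonneg (h₂x x z (v x))) (abs_nonneg (h₂z x z (v x))),
          mul_le_mul_of_nonneg_right hs2 (sq_nonneg (v' x))]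
      rw [abs_of_nonneg (by positivity)]
      refine mul_le_mul hσz.2 hA (by positivity) hσmax.le
  -- outer bound
  have hBc : ContinuousOn Bf (Icc (-L) L) := by
    rw [hBfdef]
    exact (continuousOn_const.mul (continuousOn_const.add
      (continuousOn_const.mul (hvc.pow 2)))).add (continuousOn_const.mul (hv'c.pow 2))
  have hGint : IntervalIntegrable (fun x => σmax * (d + 1) * Bf x) volume (-L) L :=
    (continuousOn_const.mul hBc).intervalIntegrable_of_Icc hab.le
  have houter : ‖∫ x in (-L)..L, (∫ z in (-H - d)..(v x),
          σ x z * (if z ≤ -H then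
              (h₁x x z (v x) + h₁w x z (v x) * v' x) ^ 2 + (h₁z x z (v x)) ^ 2
            else
              (h₂x x z (v x) + h₂w x z (v x) * v' x) ^ 2 + (h₂z x z (v x)) ^ 2))‖
        ≤ |∫ x in (-L)..L, σmax * (d + 1) * Bf x| := by
    apply intervalIntegral.norm_integral_le_abs_of_norm_le _ hGint
    rw [uIoc_of_le hab.le]
    exact Filter.eventually_of_mem (self_mem_ae_restrict measurableSet_Ioc)
      (fun x hx => hinner x hx)
  set A := ∫ x in (-L)..L, (v x) ^ 2 with hA
  set S := ∫ x in (-L)..L, (v' x) ^ 2 with hS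
  set Bq := ∫ x in (-L)..L, (v'' x) ^ 2 with hBq
  have hIv2 : IntervalIntegrable (fun x => (v x) ^ 2) volume (-L) L :=
    (hvc.pow 2).intervalIntegrable_of_Icc hab.le
  have hIS : IntervalIntegrable (fun x => (v' x) ^ 2) volume (-L) L :=
    (hv'c.pow 2).intervalIntegrable_of_Icc hab.le
  have eG : (∫ x in (-L)..L, σmax * (d + 1) * Bf x)
      = σmax * (d + 1) * (2 * m₁ * (2 * L) + 2 * m₂ * A + 2 * m₃ * S) := by
    rw [intervalIntegral.integral_const_mul]
    congr 1
    have e0 : EqOn Bf (fun x => 2 * m₁ + 2 * m₂ * (v x) ^ 2 + 2 * m₃ * (v' x) ^ 2)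
        (uIcc (-L) L) := fun x _ => by rw [hBfdef]; ring
    rw [intervalIntegral.integral_congr e0,
      intervalIntegral.integral_add (intervalIntegrable_const.add (hIv2.const_mul _))
        (hIS.const_mul _),
      intervalIntegral.integral_add intervalIntegrable_const (hIv2.const_mul _),
      intervalIntegral.integral_const_mul, intervalIntegral.integral_const_mul,
      intervalIntegral.integral_const, smul_eq_mul]
    rw [intervalIntegral.integral_const_mul, ← hA, ← hS]
    ring
  have hA0 : 0 ≤ A := intervalIntegral.integral_nonneg hab.le (fun x _ => sq_nonneg _)
  have hS0 : 0 ≤ S := intervalIntegral.integral_nonneg hab.le (fun x _ => sq_nonneg _)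
  have hSP : S ≤ Real.sqrt A * Real.sqrt Bq :=
    myinterp (-L) L hab v v' v'' hv hv'c hvb hv'a hrep hii hii2
  have hA4 : A ≤ 4 * L ^ 2 * S := by
    have := mypoincare (-L) L hab v v' hv hv'c hva
    have e : (L - -L) ^ 2 = 4 * L ^ 2 := by ring
    rw [e] at this
    exact this
  have hP0 : 0 ≤ Real.sqrt A * Real.sqrt Bq :=
    mul_nonneg (Real.sqrt_nonneg _) (Real.sqrt_nonneg _)
  set P := Real.sqrt A * Real.sqrt Bq with hP
  have hmain : (∫ x in (-L)..L, (∫ z in (-H - d)..(v x),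
          σ x z * (if z ≤ -H then
              (h₁x x z (v x) + h₁w x z (v x) * v' x) ^ 2 + (h₁z x z (v x)) ^ 2
            else
              (h₂x x z (v x) + h₂w x z (v x) * v' x) ^ 2 + (h₂z x z (v x)) ^ 2)))
      ≤ σmax * (d + 1) * (2 * m₁ * (2 * L) + 2 * m₂ * A + 2 * m₃ * S) := by
    have hnn1 : (0:ℝ) ≤ 2 * m₁ * (2 * L) + 2 * m₂ * A + 2 * m₃ * S := by
      have h1 := mul_nonneg hm₂.le hA0
      have h2 := mul_nonneg hm₃.le hS0
      nlinarith
    have hnn2 : (0:ℝ) ≤ σmax * (d + 1) * (2 * m₁ * (2 * L) + 2 * m₂ * A + 2 * m₃ * S) :=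
      mul_nonneg (by positivity) hnn1
    refine (le_abs_self _).trans (houter.trans (le_of_eq ?_))
    rw [eG, abs_of_nonneg hnn2]
  have step1 : m₂ * A + m₃ * S ≤ (4 * L ^ 2 * m₂ + m₃) * P := by
    nlinarith [mul_le_mul_of_nonneg_left hA4 hm₂.le,
      mul_le_mul_of_nonneg_left hSP hm₃.le,
      mul_le_mul_of_nonneg_left hSP (by positivity : (0:ℝ) ≤ 4 * L ^ 2 * m₂)]
  have step2 : σmax * (d + 1) * (2 * L * m₁ + (m₂ * A + m₃ * S))
      ≤ σmax * (d + 1) * (2 * L * m₁ + 4 * L ^ 2 * m₂ + m₃) * (1 + P) := by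
    rw [mul_assoc (σmax * (d + 1))]
    apply mul_le_mul_of_nonneg_left _ (by positivity : (0:ℝ) ≤ σmax * (d + 1))
    have h1 : (2 * L * m₁ + 4 * L ^ 2 * m₂ + m₃) * (1 + P)
        = 2 * L * m₁ + 4 * L ^ 2 * m₂ + m₃ + (2 * L * m₁ + 4 * L ^ 2 * m₂ + m₃) * P := by ring
    nlinarith [step1, mul_nonneg (by positivity : (0:ℝ) ≤ 2 * L * m₁) hP0]
  calc (1 / 2) * (∫ x in (-L)..L, (∫ z in (-H - d)..(v x),
          σ x z * (if z ≤ -H then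
              (h₁x x z (v x) + h₁w x z (v x) * v' x) ^ 2 + (h₁z x z (v x)) ^ 2
            else
              (h₂x x z (v x) + h₂w x z (v x) * v' x) ^ 2 + (h₂z x z (v x)) ^ 2)))
      ≤ (1 / 2) * (σmax * (d + 1) * (2 * m₁ * (2 * L) + 2 * m₂ * A + 2 * m₃ * S)) := by
        linarith [hmain]
  _ = σmax * (d + 1) * (2 * L * m₁ + (m₂ * A + m₃ * S)) := by ring
  _ ≤ σmax * (d + 1) * (2 * L * m₁ + 4 * L ^ 2 * m₂ + m₃) * (1 + P) := step2
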